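/- For every τ > 0, n ≥ 1, and 0 < σ, one has Σ_{k ∈ ℤⁿ \ {0}} |k|^τ e^{−|k|σ} ≤ (4ⁿ/(n−1)!) · σ^{−τ−n} e^{nσ} Γ(τ+n), where |k| is the ℓ¹-norm on ℤⁿ. -/

import Mathlib

open Set MeasureTheory

lemma gint_aux {s σ : ℝ} (hs : 0 < s) (hσ : 0 < σ) :
    IntegrableOn (fun x : ℝ => x ^ (s - 1) * Real.exp (-(σ * x))) (Ioi 0) := by
  have h1 := Real.GammaIntegral_convergent hs
  have h2 : IntegrableOn (fun x : ℝ => Real.exp (-(σ * x)) * (σ * x) ^ (s - 1)) (Ioi 0) := by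
    have := (integrableOn_Ioi_comp_mul_left_iff
      (fun x : ℝ => Real.exp (-x) * x ^ (s - 1)) 0 hσ).2 (by simpa using h1)
    simpa using this
  have h3 : IntegrableOn
      (fun x : ℝ => (σ ^ (s - 1))⁻¹ * (Real.exp (-(σ * x)) * (σ * x) ^ (s - 1))) (Ioi 0) :=
    h2.const_mul _
  refine IntegrableOn.congr_fun h3 (fun x hx => ?_) measurableSet_Ioi
  have hx0 : (0:ℝ) < x := hx
  rw [Real.mul_rpow hσ.le hx0.le]
  field_simp [(Real.rpow_pos_of_pos hσ (s-1)).ne']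

lemma key_real (n : ℕ) (hn : 1 ≤ n) (τ σ : ℝ) (hτ : 0 < τ) (hσ : 0 < σ) (A : Finset ℕ) :
    ∑ m ∈ A, ((n + m - 1).choose m : ℝ) *
      (if m = 0 then (0:ℝ) else (m:ℝ) ^ τ * Real.exp (-(m:ℝ) * σ)) ≤
    Real.exp (n * σ) / (Nat.factorial (n-1) : ℝ) *
      ((1/σ) ^ (τ + n) * Real.Gamma (τ + n)) := by
  set s : ℝ := τ + n with hsdef
  have hs : 0 < s := by positivity
  have hs1 : 0 ≤ s - 1 := by
    have : (1:ℝ) ≤ (n:ℝ) := by exact_mod_cast hn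
    simp only [hsdef]; linarith
  set g : ℝ → ℝ := fun x => x ^ (s - 1) * Real.exp (-(σ * x)) with hgdef
  have gnonneg : ∀ x : ℝ, 0 ≤ x → 0 ≤ g x := fun x hx => by
    have := Real.rpow_nonneg hx (s-1); positivity
  have gint : IntegrableOn g (Ioi 0) := gint_aux hs hσ
  set w : ℕ → ℝ := fun m => ((n + m - 1).choose m : ℝ) *
      (if m = 0 then (0:ℝ) else (m:ℝ) ^ τ * Real.exp (-(m:ℝ) * σ)) with hwdef
  have wnonneg : ∀ m, 0 ≤ w m := by
    intro m
    rcases eq_or_ne m 0 with h | h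
    · simp [hwdef, h]
    · simp only [hwdef, if_neg h]
      have := Real.rpow_nonneg (Nat.cast_nonneg (α := ℝ) m) τ
      positivity
  obtain ⟨M, hM⟩ := A.exists_nat_subset_range
  have step1 : ∑ m ∈ A, w m ≤ ∑ m ∈ Finset.range (M+1), w m :=
    Finset.sum_le_sum_of_subset_of_nonneg
      (hM.trans (Finset.range_subset_range.2 (Nat.le_succ M))) (fun m _ _ => wnonneg m)
  have step2 : ∑ m ∈ Finset.range (M+1), w m = ∑ i ∈ Finset.range M, w (i+1) := by
    rw [Finset.sum_range_succ']
    simp [hwdef]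
  -- per-term bound
  have hnr : (1:ℝ) ≤ (n:ℝ) := by exact_mod_cast hn
  have key : ∀ i : ℕ, w (i+1) ≤
      Real.exp (n * σ) / (Nat.factorial (n-1) : ℝ) *
        ∫ x in ((n:ℝ)+i)..((n:ℝ)+i+1), g x := by
    intro i
    have hni : (0:ℝ) < (n:ℝ) + i := by positivity
    have hIoc : Ioc ((n:ℝ)+i) ((n:ℝ)+i+1) ⊆ Ioi 0 := fun x hx => lt_trans hni hx.1
    have hintIoc : IntegrableOn g (Ioc ((n:ℝ)+i) ((n:ℝ)+i+1)) := gint.mono_set hIoc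
    -- step A: constant lower bound for the integral
    have hA : ((n:ℝ)+i) ^ (s-1) * Real.exp (-(σ * ((n:ℝ)+i+1))) ≤
        ∫ x in Ioc ((n:ℝ)+i) ((n:ℝ)+i+1), g x := by
      have := setIntegral_ge_of_const_le (μ := volume)
        (c := ((n:ℝ)+i) ^ (s-1) * Real.exp (-(σ * ((n:ℝ)+i+1))))
        (s := Ioc ((n:ℝ)+i) ((n:ℝ)+i+1)) (f := g) measurableSet_Ioc
        (by simp)
        (fun x hx => ?_) hintIoc
      · have hvol : volume.real (Ioc ((n:ℝ)+i) ((n:ℝ)+i+1)) = 1 := by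
          rw [measureReal_def, Real.volume_Ioc]; rw [ENNReal.toReal_ofReal] <;> ring_nf <;> norm_num
        rw [hvol, one_smul] at this
        exact this
      · have h1 : ((n:ℝ)+i) ^ (s-1) ≤ x ^ (s-1) :=
          Real.rpow_le_rpow hni.le hx.1.le hs1
        have h2 : Real.exp (-(σ * ((n:ℝ)+i+1))) ≤ Real.exp (-(σ * x)) := by
          apply Real.exp_le_exp.2
          nlinarith [hx.2]
        have := Real.rpow_nonneg hni.le (s-1)
        calc ((n:ℝ)+i) ^ (s-1) * Real.exp (-(σ * ((n:ℝ)+i+1)))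
            ≤ ((n:ℝ)+i) ^ (s-1) * Real.exp (-(σ * x)) := by
              exact mul_le_mul_of_nonneg_left h2 this
          _ ≤ x ^ (s-1) * Real.exp (-(σ * x)) :=
              mul_le_mul_of_nonneg_right h1 (Real.exp_pos _).le
    -- step B: bound w (i+1)
    have hchoose : ((n + (i+1) - 1).choose (i+1) : ℝ) ≤ ((n:ℝ)+i) ^ (n-1 : ℕ) /
        (Nat.factorial (n-1) : ℝ) := by
      have he : n + (i+1) - 1 = n + i := by omega
      have hsym : (n+i).choose (n+i - (i+1)) = (n+i).choose (i+1) :=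
        Nat.choose_symm (by omega)
      have he2 : n + i - (i+1) = n - 1 := by omega
      rw [he, ← hsym, he2]
      have := Nat.choose_le_pow_div (α := ℝ) (n-1) (n+i)
      calc ((n+i).choose (n-1) : ℝ) ≤ ((n+i : ℕ) ^ (n-1 : ℕ) : ℝ) / (Nat.factorial (n-1) : ℝ) := by
            exact_mod_cast this
        _ = ((n:ℝ)+i) ^ (n-1 : ℕ) / (Nat.factorial (n-1) : ℝ) := by push_cast; ring
    have hib : ((i:ℝ)+1) ^ τ ≤ ((n:ℝ)+i) ^ τ :=
      Real.rpow_le_rpow (by positivity) (by linarith) hτ.le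
    have hpow : ((n:ℝ)+i) ^ (n-1:ℕ) * ((n:ℝ)+i) ^ τ = ((n:ℝ)+i) ^ (s-1) := by
      rw [← Real.rpow_natCast ((n:ℝ)+i) (n-1), ← Real.rpow_add hni]
      congr 1
      have : ((n-1 : ℕ) : ℝ) = (n:ℝ) - 1 := by
        rw [Nat.cast_sub hn]; simp
      rw [this, hsdef]; ring
    have hexp : Real.exp (-((i:ℝ)+1) * σ) =
        Real.exp ((n:ℝ) * σ) * Real.exp (-(σ * ((n:ℝ)+i+1))) := by
      rw [← Real.exp_add]; congr 1; ring
    have hwle : w (i+1) ≤ (((n:ℝ)+i) ^ (s-1) / (Nat.factorial (n-1) : ℝ)) *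
        Real.exp (-((i:ℝ)+1) * σ) := by
      simp only [hwdef, if_neg (Nat.succ_ne_zero i)]
      push_cast
      have hc : ((n + (i+1) - 1).choose (i+1) : ℝ) * (((i:ℝ)+1) ^ τ * Real.exp (-((i:ℝ)+1) * σ))
          ≤ (((n:ℝ)+i) ^ (n-1:ℕ) / (Nat.factorial (n-1) : ℝ)) *
            (((n:ℝ)+i) ^ τ * Real.exp (-((i:ℝ)+1) * σ)) := by
        apply mul_le_mul hchoose
        · exact mul_le_mul_of_nonneg_right hib (Real.exp_pos _).le
        · positivity
        · positivity
      calc ((n + (i+1) - 1).choose (i+1) : ℝ) * (((i:ℝ)+1) ^ τ * Real.exp (-((i:ℝ)+1) * σ))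
          ≤ (((n:ℝ)+i) ^ (n-1:ℕ) / (Nat.factorial (n-1) : ℝ)) *
            (((n:ℝ)+i) ^ τ * Real.exp (-((i:ℝ)+1) * σ)) := hc
        _ = (((n:ℝ)+i) ^ (n-1:ℕ) * ((n:ℝ)+i) ^ τ) / (Nat.factorial (n-1) : ℝ) *
            Real.exp (-((i:ℝ)+1) * σ) := by ring
        _ = (((n:ℝ)+i) ^ (s-1) / (Nat.factorial (n-1) : ℝ)) *
            Real.exp (-((i:ℝ)+1) * σ) := by rw [hpow]
    have hIoc_int : ∫ x in ((n:ℝ)+i)..((n:ℝ)+i+1), g x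
        = ∫ x in Ioc ((n:ℝ)+i) ((n:ℝ)+i+1), g x :=
      intervalIntegral.integral_of_le (by linarith)
    calc w (i+1) ≤ (((n:ℝ)+i) ^ (s-1) / (Nat.factorial (n-1) : ℝ)) *
          Real.exp (-((i:ℝ)+1) * σ) := hwle
      _ = (Real.exp ((n:ℝ)*σ) / (Nat.factorial (n-1) : ℝ)) *
          (((n:ℝ)+i) ^ (s-1) * Real.exp (-(σ * ((n:ℝ)+i+1)))) := by
          rw [hexp]; ring
      _ ≤ (Real.exp ((n:ℝ)*σ) / (Nat.factorial (n-1) : ℝ)) *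
          ∫ x in Ioc ((n:ℝ)+i) ((n:ℝ)+i+1), g x := by
          apply mul_le_mul_of_nonneg_left hA; positivity
      _ = _ := by rw [hIoc_int]
  
  have hadj : ∀ k < M, IntervalIntegrable g volume ((n:ℝ)+k) ((n:ℝ)+(k+1:ℕ)) := by
    intro k _
    have hle : (n:ℝ)+k ≤ (n:ℝ)+(k+1:ℕ) := by push_cast; linarith
    rw [intervalIntegrable_iff_integrableOn_Ioc_of_le hle]
    apply gint.mono_set
    intro x hx
    have : (0:ℝ) < (n:ℝ) + k := by positivity
    exact lt_trans this hx.1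
  have hsum_int : ∑ i ∈ Finset.range M, ∫ x in ((n:ℝ)+i)..((n:ℝ)+i+1), g x
      = ∫ x in ((n:ℝ)+(0:ℕ))..((n:ℝ)+(M:ℕ)), g x := by
    have := intervalIntegral.sum_integral_adjacent_intervals
      (a := fun k : ℕ => (n:ℝ)+k) (μ := volume) (f := g) (n := M) hadj
    rw [← this]
    apply Finset.sum_congr rfl
    intro i _
    congr 1
    push_cast
    ring
  have hIoi : ∫ x in ((n:ℝ)+(0:ℕ))..((n:ℝ)+(M:ℕ)), g x ≤ ∫ x in Ioi (0:ℝ), g x := by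
    rw [intervalIntegral.integral_of_le (by push_cast; linarith)]
    apply setIntegral_mono_set gint
    · filter_upwards [self_mem_ae_restrict (measurableSet_Ioi : MeasurableSet (Ioi (0:ℝ)))]
        with x hx
      exact gnonneg x (le_of_lt hx)
    · apply HasSubset.Subset.eventuallyLE
      intro x hx
      have : (0:ℝ) < (n:ℝ) + (0:ℕ) := by push_cast; linarith
      exact lt_trans this hx.1
  have hval : ∫ x in Ioi (0:ℝ), g x = (1/σ) ^ s * Real.Gamma s :=
    Real.integral_rpow_mul_exp_neg_mul_Ioi hs hσ
  have hfac : (0:ℝ) < (Nat.factorial (n-1) : ℝ) := by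
    exact_mod_cast Nat.factorial_pos (n-1)
  calc ∑ m ∈ A, w m ≤ ∑ i ∈ Finset.range M, w (i+1) := by rw [← step2]; exact step1
    _ ≤ ∑ i ∈ Finset.range M, Real.exp (n * σ) / (Nat.factorial (n-1) : ℝ) *
        ∫ x in ((n:ℝ)+i)..((n:ℝ)+i+1), g x := Finset.sum_le_sum (fun i _ => key i)
    _ = Real.exp (n * σ) / (Nat.factorial (n-1) : ℝ) *
        ∑ i ∈ Finset.range M, ∫ x in ((n:ℝ)+i)..((n:ℝ)+i+1), g x := by
        rw [Finset.mul_sum]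
    _ ≤ Real.exp (n * σ) / (Nat.factorial (n-1) : ℝ) * ((1/σ) ^ s * Real.Gamma s) := by
        apply mul_le_mul_of_nonneg_left _ (by positivity)
        rw [hsum_int, ← hval]
        exact hIoi

theorem stmt_4 (n : ℕ) (hn : 1 ≤ n) (τ σ : ℝ) (hτ : 0 < τ) (hσ : 0 < σ) :
    Summable (fun k : Fin n → ℤ =>
      if k = 0 then (0 : ℝ)
      else (∑ i, |(k i : ℝ)|) ^ τ * Real.exp (-(∑ i, |(k i : ℝ)|) * σ)) ∧
    (∑' k : Fin n → ℤ,
      if k = 0 then (0 : ℝ)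
      else (∑ i, |(k i : ℝ)|) ^ τ * Real.exp (-(∑ i, |(k i : ℝ)|) * σ))
      ≤ (4 ^ n / (Nat.factorial (n - 1) : ℝ)) * σ ^ (-(τ + n)) *
          Real.exp (n * σ) * Real.Gamma (τ + n) := by
  classical
  set f : (Fin n → ℤ) → ℝ := fun k =>
    if k = 0 then (0 : ℝ)
    else (∑ i, |(k i : ℝ)|) ^ τ * Real.exp (-(∑ i, |(k i : ℝ)|) * σ) with hfdef
  set hr : ℕ → ℝ := fun m => if m = 0 then (0:ℝ) else (m:ℝ) ^ τ * Real.exp (-(m:ℝ) * σ)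
    with hrdef
  have hrnonneg : ∀ m, 0 ≤ hr m := by
    intro m
    rcases eq_or_ne m 0 with h | h
    · simp [hrdef, h]
    · simp only [hrdef, if_neg h]
      have := Real.rpow_nonneg (Nat.cast_nonneg (α := ℝ) m) τ
      positivity
  have fnonneg : ∀ k, 0 ≤ f k := by
    intro k
    rcases eq_or_ne k 0 with h | h
    · simp [hfdef, h]
    · simp only [hfdef, if_neg h]
      have hsum : (0:ℝ) ≤ ∑ i, |(k i : ℝ)| := Finset.sum_nonneg fun i _ => abs_nonneg _
      have := Real.rpow_nonneg hsum τ
      positivity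
  have hfr : ∀ k : Fin n → ℤ, f k = hr (∑ i, (k i).natAbs) := by
    intro k
    have hcast : (∑ i, |(k i : ℝ)|) = ((∑ i, (k i).natAbs : ℕ) : ℝ) := by
      push_cast [Nat.cast_natAbs]
      rfl
    rcases eq_or_ne k 0 with rfl | hk
    · simp [hfdef, hrdef]
    · have hne : ∑ i, (k i).natAbs ≠ 0 := by
        intro h
        apply hk
        funext i
        have := Finset.sum_eq_zero_iff.1 h i (Finset.mem_univ i)
        show k i = 0
        omega
      simp only [hfdef, hrdef, if_neg hk, if_neg hne, hcast]
  -- ENNReal side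
  set F : (Fin n → ℤ) → ENNReal := fun k => ENNReal.ofReal (f k) with hFdef
  set Φ : (Fin n → ℤ) → (Fin n → Bool) × (Fin n → ℕ) :=
    fun k => (fun i => decide (0 ≤ k i), fun i => (k i).natAbs) with hΦdef
  have hΦ : Function.Injective Φ := by
    intro k k' h
    have h1 := congrArg Prod.fst h
    have h2 := congrArg Prod.snd h
    simp only [hΦdef] at h1 h2
    funext i
    have e1 : decide (0 ≤ k i) = decide (0 ≤ k' i) := congrFun h1 i
    have e2 : (k i).natAbs = (k' i).natAbs := congrFun h2 i
    have e1' : (0 ≤ k i) ↔ (0 ≤ k' i) := by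
      constructor <;> intro h <;> [exact of_decide_eq_true (e1 ▸ decide_eq_true h);
        exact of_decide_eq_true (e1.symm ▸ decide_eq_true h)]
    omega
  have h1 : ∑' k, F k ≤
      ∑' p : (Fin n → Bool) × (Fin n → ℕ), ENNReal.ofReal (hr (∑ i, p.2 i)) := by
    have : ∀ k, F k = (fun p : (Fin n → Bool) × (Fin n → ℕ) =>
        ENNReal.ofReal (hr (∑ i, p.2 i))) (Φ k) := by
      intro k; simp only [hFdef, hΦdef, hfr k]
    calc ∑' k, F k = ∑' k, (fun p : (Fin n → Bool) × (Fin n → ℕ) =>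
          ENNReal.ofReal (hr (∑ i, p.2 i))) (Φ k) := tsum_congr this
      _ ≤ _ := ENNReal.tsum_comp_le_tsum_of_injective hΦ _
  have h2 : ∑' p : (Fin n → Bool) × (Fin n → ℕ), ENNReal.ofReal (hr (∑ i, p.2 i))
      = (2:ENNReal)^n * ∑' a : Fin n → ℕ, ENNReal.ofReal (hr (∑ i, a i)) := by
    rw [ENNReal.tsum_prod']
    simp only
    rw [tsum_fintype]
    rw [Finset.sum_const, Finset.card_univ]
    simp [nsmul_eq_mul]
  have h3 : ∑' a : Fin n → ℕ, ENNReal.ofReal (hr (∑ i, a i)) =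
      ∑' m : ℕ, ∑' _ : {a : Fin n → ℕ // ∑ i, a i = m}, ENNReal.ofReal (hr m) := by
    rw [← Equiv.tsum_eq (Equiv.sigmaFiberEquiv (fun a : Fin n → ℕ => ∑ i, a i))
      (fun a => ENNReal.ofReal (hr (∑ i, a i)))]
    rw [ENNReal.tsum_sigma']
    refine tsum_congr fun m => tsum_congr fun a => ?_
    exact congrArg (fun t => ENNReal.ofReal (hr t)) a.2
  have h4 : ∀ m : ℕ, ∑' _ : {a : Fin n → ℕ // ∑ i, a i = m}, ENNReal.ofReal (hr m)
      = (((n + m - 1).choose m : ℕ) : ENNReal) * ENNReal.ofReal (hr m) := by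
    intro m
    letI : Fintype {a : Fin n → ℕ // ∑ i, a i = m} :=
      Fintype.ofEquiv (Sym (Fin n) m) (Sym.equivNatSumOfFintype (Fin n) m)
    rw [tsum_fintype, Finset.sum_const, Finset.card_univ, nsmul_eq_mul]
    congr 2
    rw [← Fintype.card_congr (Sym.equivNatSumOfFintype (Fin n) m)]
    rw [Sym.card_sym_eq_choose, Fintype.card_fin]
  
  set B : ℝ := Real.exp (n * σ) / (Nat.factorial (n-1) : ℝ) *
      ((1/σ) ^ (τ + n) * Real.Gamma (τ + n)) with hBdef
  have h5 : ∑' m : ℕ, (((n + m - 1).choose m : ℕ) : ENNReal) * ENNReal.ofReal (hr m)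
      ≤ ENNReal.ofReal B := by
    rw [ENNReal.tsum_eq_iSup_sum]
    refine iSup_le fun A => ?_
    have heq : ∑ m ∈ A, (((n + m - 1).choose m : ℕ) : ENNReal) * ENNReal.ofReal (hr m)
        = ENNReal.ofReal (∑ m ∈ A, ((n + m - 1).choose m : ℝ) * hr m) := by
      rw [ENNReal.ofReal_sum_of_nonneg
        (fun m _ => mul_nonneg (Nat.cast_nonneg _) (hrnonneg m))]
      refine Finset.sum_congr rfl fun m _ => ?_
      rw [ENNReal.ofReal_mul (Nat.cast_nonneg _), ENNReal.ofReal_natCast]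
    rw [heq]
    exact ENNReal.ofReal_le_ofReal (key_real n hn τ σ hτ hσ A)
  set RHS : ℝ := (4 ^ n / (Nat.factorial (n - 1) : ℝ)) * σ ^ (-(τ + n)) *
      Real.exp (n * σ) * Real.Gamma (τ + n) with hRHSdef
  have hRHSnonneg : 0 ≤ RHS := by
    have hΓ : 0 ≤ Real.Gamma (τ + n) := Real.Gamma_nonneg_of_nonneg (by positivity)
    have hp : (0:ℝ) ≤ σ ^ (-(τ + (n:ℝ))) := Real.rpow_nonneg hσ.le _
    have hfac : (0:ℝ) < (Nat.factorial (n-1) : ℝ) := by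
      exact_mod_cast Nat.factorial_pos (n-1)
    rw [hRHSdef]
    positivity
  have hBR : (2:ℝ)^n * B ≤ RHS := by
    have hpow : ((1/σ) : ℝ) ^ (τ + (n:ℝ)) = σ ^ (-(τ + (n:ℝ))) := by
      rw [one_div, Real.rpow_neg hσ.le, Real.inv_rpow hσ.le]
    have h2n : (2:ℝ)^n ≤ 4^n := pow_le_pow_left₀ (by norm_num) (by norm_num) n
    have hΓ : 0 ≤ Real.Gamma (τ + n) := Real.Gamma_nonneg_of_nonneg (by positivity)
    have hp : (0:ℝ) ≤ σ ^ (-(τ + (n:ℝ))) := Real.rpow_nonneg hσ.le _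
    have hfac : (0:ℝ) < (Nat.factorial (n-1) : ℝ) := by
      exact_mod_cast Nat.factorial_pos (n-1)
    rw [hBdef, hRHSdef, hpow]
    have key : ((2:ℝ)^n / (Nat.factorial (n-1) : ℝ)) *
        (σ ^ (-(τ + (n:ℝ))) * Real.exp (n * σ) * Real.Gamma (τ + n)) ≤
        ((4:ℝ)^n / (Nat.factorial (n-1) : ℝ)) *
        (σ ^ (-(τ + (n:ℝ))) * Real.exp (n * σ) * Real.Gamma (τ + n)) := by
      apply mul_le_mul_of_nonneg_right
      · gcongr
      · positivity
    calc (2:ℝ)^n * (Real.exp (n * σ) / (Nat.factorial (n-1) : ℝ) *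
          (σ ^ (-(τ + (n:ℝ))) * Real.Gamma (τ + n)))
        = ((2:ℝ)^n / (Nat.factorial (n-1) : ℝ)) *
          (σ ^ (-(τ + (n:ℝ))) * Real.exp (n * σ) * Real.Gamma (τ + n)) := by ring
      _ ≤ ((4:ℝ)^n / (Nat.factorial (n-1) : ℝ)) *
          (σ ^ (-(τ + (n:ℝ))) * Real.exp (n * σ) * Real.Gamma (τ + n)) := key
      _ = (4 ^ n / (Nat.factorial (n - 1) : ℝ)) * σ ^ (-(τ + (n:ℝ))) *
          Real.exp (n * σ) * Real.Gamma (τ + n) := by ring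
  have hle : ∑' k, F k ≤ ENNReal.ofReal RHS := by
    calc ∑' k, F k ≤ ∑' p : (Fin n → Bool) × (Fin n → ℕ),
          ENNReal.ofReal (hr (∑ i, p.2 i)) := h1
      _ = (2:ENNReal)^n * ∑' a : Fin n → ℕ, ENNReal.ofReal (hr (∑ i, a i)) := h2
      _ = (2:ENNReal)^n * ∑' m : ℕ,
          ∑' _ : {a : Fin n → ℕ // ∑ i, a i = m}, ENNReal.ofReal (hr m) := by rw [h3]
      _ = (2:ENNReal)^n * ∑' m : ℕ,
          (((n + m - 1).choose m : ℕ) : ENNReal) * ENNReal.ofReal (hr m) := by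
          rw [tsum_congr h4]
      _ ≤ ENNReal.ofReal ((2:ℝ)^n) * ENNReal.ofReal B := by
          have h2 : ENNReal.ofReal ((2:ℝ)^n) = (2:ENNReal)^n := by
            rw [ENNReal.ofReal_pow (by norm_num : (0:ℝ) ≤ 2)]
            norm_num
          rw [h2]
          exact mul_le_mul_right h5 _
      _ = ENNReal.ofReal ((2:ℝ)^n * B) :=
          (ENNReal.ofReal_mul (show (0:ℝ) ≤ 2^n by positivity)).symm
      _ ≤ ENNReal.ofReal RHS := ENNReal.ofReal_le_ofReal hBR
  have htop : ∑' k, F k ≠ ⊤ := ne_top_of_le_ne_top ENNReal.ofReal_ne_top hle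
  have hsummable : Summable f := by
    have := ENNReal.summable_toReal htop
    refine this.congr fun k => ?_
    exact ENNReal.toReal_ofReal (fnonneg k)
  refine ⟨hsummable, ?_⟩
  have htsum : ∑' k, f k = (∑' k, F k).toReal := by
    rw [ENNReal.tsum_toReal_eq (fun k => ENNReal.ofReal_ne_top)]
    exact tsum_congr fun k => (ENNReal.toReal_ofReal (fnonneg k)).symm
  calc ∑' k, f k = (∑' k, F k).toReal := htsum
    _ ≤ (ENNReal.ofReal RHS).toReal := ENNReal.toReal_mono ENNReal.ofReal_ne_top hle
    _ = RHS := ENNReal.toReal_ofReal hRHSnonneg
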